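/- arXiv:2604.27588 — 6 statements merged into one kernel-verified Lean document; each statement's English description precedes it below -/
import Mathlib

section
/- A topological space is quasi-pseudomodulable if and only if it is quasi-pseudometrizable. -/
open scoped ENNReal

/-- A set is open for the topology associated to a quasi-pseudometric modular `w`
iff every point has a basic modular neighborhood `W_{t,ε}(x)` inside it. -/
def modOpen {X : Type*} (w : ℝ → X → X → ℝ≥0∞) (G : Set X) : Prop :=
  ∀ x ∈ G, ∃ t ε : ℝ, 0 < t ∧ 0 < ε ∧ {y : X | w t x y < ENNReal.ofReal ε} ⊆ G

/-- A topological space is quasi-pseudomodulable if its topology is the topology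
associated to some quasi-pseudometric modular. -/
def QuasiPseudomodulable (X : Type*) [TopologicalSpace X] : Prop :=
  ∃ w : ℝ → X → X → ℝ≥0∞,
    (∀ t : ℝ, 0 < t → ∀ x : X, w t x x = 0) ∧
    (∀ (x y z : X) (t s : ℝ), 0 < t → 0 < s →
      w (t + s) x y ≤ w t x z + w s z y) ∧
    (∀ G : Set X, IsOpen G ↔ modOpen w G)

/-- A topological space is quasi-pseudometrizable if its topology is the open-ball
topology of some quasi-pseudometric. -/
def QuasiPseudometrizable (X : Type*) [TopologicalSpace X] : Prop :=
  ∃ d : X → X → ℝ,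
    (∀ x y : X, 0 ≤ d x y) ∧ (∀ x : X, d x x = 0) ∧
    (∀ x y z : X, d x y ≤ d x z + d z y) ∧
    (∀ G : Set X, IsOpen G ↔ ∀ x ∈ G, ∃ ε : ℝ, 0 < ε ∧ {y : X | d x y < ε} ⊆ G)

/-- a topological space is quasi-pseudomodulable iff it is
quasi-pseudometrizable. -/
theorem stmt_4 (X : Type*) [TopologicalSpace X] :
    QuasiPseudomodulable X ↔ QuasiPseudometrizable X := by
  constructor
  · rintro ⟨w, hwrefl, hwtri, hwtop⟩
    -- w is antitone in t
    have hmono : ∀ (x y : X) (t t' : ℝ), 0 < t' → t' ≤ t → w t x y ≤ w t' x y := by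
      intro x y t t' ht' htt
      rcases eq_or_lt_of_le htt with h | h
      · rw [h]
      · have ht : t = t' + (t - t') := by ring
        rw [ht]
        calc w (t' + (t - t')) x y ≤ w t' x y + w (t - t') y y :=
              hwtri x y y t' (t - t') ht' (by linarith)
          _ = w t' x y := by rw [hwrefl (t - t') (by linarith) y, add_zero]
    set S : X → X → Set ℝ := fun x y =>
      {r | ∃ t ε : ℝ, 0 < t ∧ 0 < ε ∧ t + ε ≤ r ∧ w t x y < ENNReal.ofReal ε} with hSdef
    set d : X → X → ℝ := fun x y => sInf (insert 1 (S x y)) with hddef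
    have hbdd : ∀ x y, BddBelow (insert 1 (S x y)) := by
      intro x y
      refine ⟨0, ?_⟩
      rintro r (rfl | ⟨t, ε, ht, hε, hle, _⟩)
      · norm_num
      · linarith
    have hd0 : ∀ x y, 0 ≤ d x y := by
      intro x y
      refine le_csInf ⟨1, Set.mem_insert _ _⟩ ?_
      rintro r (rfl | ⟨t, ε, ht, hε, hle, _⟩)
      · norm_num
      · linarith
    have hd1 : ∀ x y, d x y ≤ 1 := fun x y => csInf_le (hbdd x y) (Set.mem_insert _ _)
    have hmem : ∀ x y r, r ∈ S x y → d x y ≤ r := fun x y r hr =>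
      csInf_le (hbdd x y) (Set.mem_insert_of_mem _ hr)
    have hlt : ∀ x y r, d x y < r → r ≤ 1 → ∃ s ∈ S x y, s < r := by
      intro x y r hr hr1
      obtain ⟨s, hs, hslt⟩ :=
        exists_lt_of_csInf_lt (Set.insert_nonempty _ _) (show sInf (insert 1 (S x y)) < r from hr)
      rcases hs with rfl | hs
      · exact absurd hslt (by linarith)
      · exact ⟨s, hs, hslt⟩
    have hdrefl : ∀ x, d x x = 0 := by
      intro x
      refine le_antisymm ?_ (hd0 x x)
      have : ∀ η : ℝ, 0 < η → d x x ≤ 0 + η := by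
        intro η hη
        rw [zero_add]
        refine hmem x x η ⟨η / 2, η / 2, by positivity, by positivity, by linarith, ?_⟩
        rw [hwrefl (η / 2) (by positivity) x]
        exact ENNReal.ofReal_pos.mpr (by positivity)
      exact le_of_forall_pos_le_add fun η hη => this η hη
    have hdtri : ∀ x y z, d x y ≤ d x z + d z y := by
      intro x y z
      rcases le_or_gt 1 (d x z + d z y) with h | h
      · exact (hd1 x y).trans h
      · refine le_of_forall_pos_le_add ?_
        intro η hη
        set η' := min η (1 - (d x z + d z y)) / 2 with hη'def
        have hη'pos : 0 < η' := by
          have h1 : 0 < 1 - (d x z + d z y) := by linarith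
          have := lt_min hη h1
          positivity
        have hη'a : η' ≤ η / 2 := by
          have := min_le_left η (1 - (d x z + d z y))
          rw [hη'def]; linarith
        have hη'b : η' < 1 - (d x z + d z y) := by
          have h1 : 0 < 1 - (d x z + d z y) := by linarith
          have := min_le_right η (1 - (d x z + d z y))
          rw [hη'def]; linarith
        obtain ⟨s1, hs1, hs1lt⟩ := hlt x z (d x z + η') (by linarith) (by
          have := hd0 z y; linarith)
        obtain ⟨s2, hs2, hs2lt⟩ := hlt z y (d z y + η') (by linarith) (by
          have := hd0 x z; linarith)
        obtain ⟨t1, ε1, ht1, hε1, hle1, hw1⟩ := hs1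
        obtain ⟨t2, ε2, ht2, hε2, hle2, hw2⟩ := hs2
        refine hmem x y _ ⟨t1 + t2, ε1 + ε2, by positivity, by positivity, by linarith, ?_⟩
        calc w (t1 + t2) x y ≤ w t1 x z + w t2 z y := hwtri x y z t1 t2 ht1 ht2
          _ < ENNReal.ofReal ε1 + ENNReal.ofReal ε2 := ENNReal.add_lt_add hw1 hw2
          _ = ENNReal.ofReal (ε1 + ε2) := (ENNReal.ofReal_add hε1.le hε2.le).symm
    refine ⟨d, hd0, hdrefl, hdtri, ?_⟩
    intro G
    rw [hwtop G]
    constructor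
    · intro hG x hx
      obtain ⟨t, ε, ht, hε, hsub⟩ := hG x hx
      set r := min t (min ε 1) / 2 with hrdef
      have hrpos : 0 < r := by
        have := lt_min ht (lt_min hε one_pos)
        positivity
      refine ⟨r, hrpos, ?_⟩
      intro y hy
      apply hsub
      have hrt : r ≤ t / 2 := by
        have := min_le_left t (min ε 1); rw [hrdef]; linarith
      have hrε : r ≤ ε / 2 := by
        have h1 := min_le_right t (min ε 1)
        have h2 := min_le_left ε 1
        rw [hrdef]; linarith
      have hr1 : r ≤ 1 := by
        have h1 := min_le_right t (min ε 1)
        have h2 := min_le_right ε 1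
        rw [hrdef]; linarith
      obtain ⟨s, hs, hslt⟩ := hlt x y r hy hr1
      obtain ⟨t', ε', ht', hε', hle, hw⟩ := hs
      have htt : t' ≤ t := by linarith
      have hεε : ε' ≤ ε := by linarith
      show w t x y < ENNReal.ofReal ε
      calc w t x y ≤ w t' x y := hmono x y t t' ht' htt
        _ < ENNReal.ofReal ε' := hw
        _ ≤ ENNReal.ofReal ε := ENNReal.ofReal_le_ofReal hεε
    · intro hG x hx
      obtain ⟨r, hr, hsub⟩ := hG x hx
      set ρ := min r 1 / 3 with hρdef
      have hρpos : 0 < ρ := by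
        have := lt_min hr one_pos
        positivity
      refine ⟨ρ, ρ, hρpos, hρpos, ?_⟩
      intro y hy
      apply hsub
      have hdle : d x y ≤ ρ + ρ := hmem x y _ ⟨ρ, ρ, hρpos, hρpos, le_refl _, hy⟩
      have hρr : ρ ≤ r / 3 := by
        have := min_le_left r 1; rw [hρdef]; linarith
      show d x y < r
      linarith
  · rintro ⟨d, hdpos, hdrefl, hdtri, hdtop⟩
    refine ⟨fun _ x y => ENNReal.ofReal (d x y), ?_, ?_, ?_⟩
    · intro t _ x; simp [hdrefl x]
    · intro x y z t s _ _
      calc ENNReal.ofReal (d x y) ≤ ENNReal.ofReal (d x z + d z y) :=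
            ENNReal.ofReal_le_ofReal (hdtri x y z)
        _ = ENNReal.ofReal (d x z) + ENNReal.ofReal (d z y) :=
            ENNReal.ofReal_add (hdpos x z) (hdpos z y)
    · intro G
      rw [hdtop G]
      constructor
      · intro h x hx
        obtain ⟨ε, hε, hsub⟩ := h x hx
        exact ⟨1, ε, one_pos, hε, fun y hy =>
          hsub ((ENNReal.ofReal_lt_ofReal_iff hε).mp hy)⟩
      · intro h x hx
        obtain ⟨t, ε, ht, hε, hsub⟩ := h x hx
        exact ⟨ε, hε, fun y hy =>
          hsub ((ENNReal.ofReal_lt_ofReal_iff hε).mpr hy)⟩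
end

section
/- There exists a metric modular space (X,w) and a point x ∈ X and parameters t,ε > 0 such that the set W_{t,ε}(x) = {y : w(t,x,y) < ε} is not open in the topology T(w). Concretely, take X = {x,y} ∪ {z_n : n ∈ ℕ} with w(t,x,y) = 1 for t < 1 and 0 for t ≥ 1; w(t,x,z_n) = 1 for t ≤ 1 and 0 for t > 1; w(t,y,z_n) = 1/n for t < 1 and 0 for t ≥ 1; w(t,z_n,z_m) = 1/min(n,m) for t < 1 and 0 for t ≥ 1; extended symmetrically with w(t,a,a) = 0. Then W_{1,1/2}(x) is not open in T(w). -/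
open scoped ENNReal

/-- The underlying set: `Sum.inl false = x`, `Sum.inl true = y`,
`Sum.inr n = z_{n+1}`. -/
abbrev ExPt : Type := Bool ⊕ ℕ

/-- The concrete metric modular of the counterexample (with `z_n` indexed by
`n : ℕ`, standing for `z_{n+1}`, so that `1/n` becomes `1/(n+1)`). -/
noncomputable def wEx (t : ℝ) : ExPt → ExPt → ℝ≥0∞
  | Sum.inl a, Sum.inl b =>
      if a = b then 0 else (if t < 1 then 1 else 0)
  | Sum.inl false, Sum.inr _ => if t ≤ 1 then 1 else 0
  | Sum.inr _, Sum.inl false => if t ≤ 1 then 1 else 0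
  | Sum.inl true, Sum.inr n => if t < 1 then ((n : ℝ≥0∞) + 1)⁻¹ else 0
  | Sum.inr n, Sum.inl true => if t < 1 then ((n : ℝ≥0∞) + 1)⁻¹ else 0
  | Sum.inr n, Sum.inr m =>
      if n = m then 0 else (if t < 1 then ((min n m : ℕ) + 1 : ℝ≥0∞)⁻¹ else 0)

lemma invA (n : ℕ) : ((n : ℝ≥0∞) + 1)⁻¹ ≤ 1 := by
  rw [ENNReal.inv_le_one]; exact le_add_self

lemma invMono {a b : ℕ} (h : a ≤ b) : ((b : ℝ≥0∞) + 1)⁻¹ ≤ ((a : ℝ≥0∞) + 1)⁻¹ := by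
  apply ENNReal.inv_le_inv.mpr
  gcongr

lemma keyL (n m : ℕ) :
    ((min n m : ℕ) + 1 : ℝ≥0∞)⁻¹ ≤ ((n : ℝ≥0∞) + 1)⁻¹ + ((m : ℝ≥0∞) + 1)⁻¹ := by
  rcases le_total n m with h | h
  · rw [min_eq_left h]; exact le_self_add
  · rw [min_eq_right h]; exact le_add_self

lemma keyGen (n m k : ℕ) :
    ((min n m : ℕ) + 1 : ℝ≥0∞)⁻¹ ≤
      ((min n k : ℕ) + 1 : ℝ≥0∞)⁻¹ + ((min k m : ℕ) + 1 : ℝ≥0∞)⁻¹ :=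
  (keyL n m).trans (add_le_add (invMono (min_le_left n k)) (invMono (min_le_right k m)))

lemma invNeZero (n : ℕ) : ((n : ℝ≥0∞) + 1)⁻¹ ≠ 0 := by
  simp [ENNReal.inv_ne_zero]

lemma invSucc (n : ℕ) : ((n : ℝ≥0∞) + 1)⁻¹ ≤ (n : ℝ≥0∞)⁻¹ :=
  ENNReal.inv_le_inv.mpr le_self_add

lemma wEx_m1 : ∀ t : ℝ, 0 < t → ∀ a : ExPt, wEx t a a = 0 := by
  rintro t ht (a | n) <;> simp [wEx]

set_option maxHeartbeats 1000000 in
lemma wEx_m2 : ∀ (a b c : ExPt) (t s : ℝ), 0 < t → 0 < s →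
    wEx (t + s) a b ≤ wEx t a c + wEx s c b := by
  rintro ((_ | _) | n) ((_ | _) | m) ((_ | _) | k) t s ht hs <;>
      simp only [wEx] <;> split_ifs <;> (try subst_vars) <;>
      first
        | rfl
        | exact zero_le
        | exact le_self_add
        | exact le_add_self
        | contradiction
        | (exfalso; linarith)
        | omega
        | exact le_add_right (invA _)
        | exact le_add_left (invA _)
        | exact le_add_left (invMono (min_le_right _ _))
        | exact le_add_right (invMono (min_le_left _ _))
        | exact keyL _ _
        | exact keyGen _ _ _
        | (simp; done)

lemma wEx_m4 : ∀ (a b : ExPt) (t : ℝ), 0 < t → wEx t a b = wEx t b a := by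
  rintro ((_ | _) | n) ((_ | _) | m) t ht <;> simp [wEx, Nat.min_comm, eq_comm]

lemma wEx_m3 : ∀ a b : ExPt,
    (∀ t : ℝ, 0 < t → wEx t a b = 0 ∧ wEx t b a = 0) → a = b := by
  rintro ((_ | _) | n) ((_ | _) | m) h
  · rfl
  · have := (h (1/2) (by norm_num)).1; norm_num [wEx] at this
  · have := (h 1 (by norm_num)).1; norm_num [wEx] at this
  · have := (h (1/2) (by norm_num)).1; norm_num [wEx] at this
  · rfl
  · have := (h (1/2) (by norm_num)).1; norm_num [wEx, invNeZero] at this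
  · have := (h 1 (by norm_num)).1; norm_num [wEx] at this
  · have := (h (1/2) (by norm_num)).1; norm_num [wEx, invNeZero] at this
  · rcases eq_or_ne n m with h1 | h1
    · exact congrArg Sum.inr h1
    · have := (h (1/2) (by norm_num)).1
      norm_num [wEx, h1, invNeZero] at this

lemma wEx_not_open : ¬ modOpen wEx
    {q : ExPt | wEx 1 (Sum.inl false) q < ENNReal.ofReal (1 / 2)} := by
  intro H
  have hy : (Sum.inl true : ExPt) ∈
      {q : ExPt | wEx 1 (Sum.inl false) q < ENNReal.ofReal (1 / 2)} := by
    simp [wEx, ENNReal.ofReal_pos]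
  obtain ⟨t, ε, ht, hε, hsub⟩ := H _ hy
  have hε' : (0 : ℝ≥0∞) < ENNReal.ofReal ε := ENNReal.ofReal_pos.mpr hε
  obtain ⟨n, hn⟩ := ENNReal.exists_inv_nat_lt (ne_of_gt hε')
  have hzn : (Sum.inr n : ExPt) ∈
      {y : ExPt | wEx t (Sum.inl true) y < ENNReal.ofReal ε} := by
    simp only [wEx, Set.mem_setOf_eq]
    split_ifs
    · exact lt_of_le_of_lt (invSucc n) hn
    · exact hε'
  have hmem := hsub hzn
  simp only [Set.mem_setOf_eq, wEx] at hmem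
  rw [if_pos le_rfl] at hmem
  have h1 : ENNReal.ofReal (1/2) ≤ 1 := by
    rw [← ENNReal.ofReal_one]; exact ENNReal.ofReal_le_ofReal (by norm_num)
  exact absurd hmem (not_lt.mpr h1)

/-- `wEx` is a metric modular on `ExPt`, yet the set
`W_{1,1/2}(x)` is not open in the associated topology `T(wEx)`. -/
theorem stmt_6 :
    -- (M1)
    (∀ t : ℝ, 0 < t → ∀ a : ExPt, wEx t a a = 0) ∧
    -- (M2)
    (∀ (a b c : ExPt) (t s : ℝ), 0 < t → 0 < s →
      wEx (t + s) a b ≤ wEx t a c + wEx s c b) ∧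
    -- (M4) symmetry
    (∀ (a b : ExPt) (t : ℝ), 0 < t → wEx t a b = wEx t b a) ∧
    -- (M3) non-degeneracy
    (∀ a b : ExPt, (∀ t : ℝ, 0 < t → wEx t a b = 0 ∧ wEx t b a = 0) → a = b) ∧
    -- `W_{1,1/2}(x)` is not open
    ¬ modOpen wEx
        {q : ExPt | wEx 1 (Sum.inl false) q < ENNReal.ofReal (1 / 2)} := by
  exact ⟨wEx_m1, wEx_m2, wEx_m4, wEx_m3, wEx_not_open⟩
end

section
/- If f : (X,w₁) → (Y,w₂) is strongly uniformly continuous between quasi-pseudometric modular spaces, then f is also strongly uniformly continuous as a map (X, w̃₁) → (Y, w̃₂) between the left regularizations; moreover for (Y,w₂) left-continuous, f : (X,w₁) → (Y,w₂) is strongly uniformly continuous iff f : (X,w̃₁) → (Y,w₂) is. -/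
open scoped ENNReal

/-- The left regularization of a quasi-pseudometric modular. -/
noncomputable def leftReg {X : Type*} (w : ℝ → X → X → ℝ≥0∞)
    (t : ℝ) (x y : X) : ℝ≥0∞ :=
  ⨅ (s : ℝ) (_ : s ∈ Set.Ioo 0 t), w s x y

/-- `f` is strongly uniformly continuous from `(X,w₁)` to `(Y,w₂)`. -/
def StronglyUC {X Y : Type*} (w₁ : ℝ → X → X → ℝ≥0∞) (w₂ : ℝ → Y → Y → ℝ≥0∞)
    (f : X → Y) : Prop :=
  ∀ t : ℝ, 0 < t → ∃ s : ℝ, 0 < s ∧ ∀ x y : X, w₂ t (f x) (f y) ≤ w₁ s x y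

lemma wMono {X : Type*} (w : ℝ → X → X → ℝ≥0∞)
    (hM1 : ∀ t : ℝ, 0 < t → ∀ x : X, w t x x = 0)
    (hM2 : ∀ (x y z : X) (t s : ℝ), 0 < t → 0 < s →
      w (t + s) x y ≤ w t x z + w s z y)
    {u t : ℝ} (hu : 0 < u) (hut : u < t) (x y : X) :
    w t x y ≤ w u x y := by
  have h := hM2 x y y u (t - u) hu (by linarith)
  rw [hM1 (t - u) (by linarith) y, add_zero] at h
  simpa using h

lemma le_leftReg {X : Type*} (w : ℝ → X → X → ℝ≥0∞)
    (hM1 : ∀ t : ℝ, 0 < t → ∀ x : X, w t x x = 0)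
    (hM2 : ∀ (x y z : X) (t s : ℝ), 0 < t → 0 < s →
      w (t + s) x y ≤ w t x z + w s z y)
    {t : ℝ} (ht : 0 < t) (x y : X) :
    w t x y ≤ leftReg w t x y :=
  le_iInf₂ fun s hs => wMono w hM1 hM2 hs.1 hs.2 x y

/-- strong uniform continuity passes to left regularizations, and
when `w₂` is left-continuous, `f : (X,w₁) → (Y,w₂)` is strongly uniformly
continuous iff `f : (X,w̃₁) → (Y,w₂)` is. -/
theorem stmt_10 {X Y : Type*} (w₁ : ℝ → X → X → ℝ≥0∞) (w₂ : ℝ → Y → Y → ℝ≥0∞)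
    (hM1₁ : ∀ t : ℝ, 0 < t → ∀ x : X, w₁ t x x = 0)
    (hM2₁ : ∀ (x y z : X) (t s : ℝ), 0 < t → 0 < s →
      w₁ (t + s) x y ≤ w₁ t x z + w₁ s z y)
    (hM1₂ : ∀ t : ℝ, 0 < t → ∀ x : Y, w₂ t x x = 0)
    (hM2₂ : ∀ (x y z : Y) (t s : ℝ), 0 < t → 0 < s →
      w₂ (t + s) x y ≤ w₂ t x z + w₂ s z y)
    (f : X → Y) :
    (StronglyUC w₁ w₂ f → StronglyUC (leftReg w₁) (leftReg w₂) f) ∧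
    ((∀ (x y : Y) (t : ℝ), 0 < t →
        w₂ t x y = ⨅ (s : ℝ) (_ : s ∈ Set.Ioo 0 t), w₂ s x y) →
      (StronglyUC w₁ w₂ f ↔ StronglyUC (leftReg w₁) w₂ f)) := by
  constructor
  · intro h t ht
    obtain ⟨s, hs, hle⟩ := h (t / 2) (by linarith)
    refine ⟨s, hs, fun x y => ?_⟩
    calc leftReg w₂ t (f x) (f y) ≤ w₂ (t / 2) (f x) (f y) :=
          iInf₂_le (t / 2) ⟨by linarith, by linarith⟩
      _ ≤ w₁ s x y := hle x y
      _ ≤ leftReg w₁ s x y := le_leftReg w₁ hM1₁ hM2₁ hs x y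
  · intro _
    constructor
    · intro h t ht
      obtain ⟨s, hs, hle⟩ := h t ht
      exact ⟨s, hs, fun x y => (hle x y).trans (le_leftReg w₁ hM1₁ hM2₁ hs x y)⟩
    · intro h t ht
      obtain ⟨s, hs, hle⟩ := h t ht
      refine ⟨s / 2, by linarith, fun x y => ?_⟩
      exact (hle x y).trans (iInf₂_le (s / 2) ⟨by linarith, by linarith⟩)
end

section
/- Let ∇ be the lattice of non-increasing functions f : (0,∞) → [0,∞] with order f ≤^op g iff g ≤ f pointwise (so the top of ∇ is the constant 0 function 𝟎). For f ∈ ∇ with f not identically ∞: f ◁ 𝟎 in ∇ if and only if (1) there exists s > 0 such that f(t) = ∞ for all t ∈ (0,s), and (2) inf_{t>0} f(t) > 0. -/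
open scoped ENNReal

/-- The positive reals `(0,∞)`. -/
abbrev Rpos : Type := {t : ℝ // 0 < t}

/-- `∇`: non-increasing `[0,∞]`-valued functions on `(0,∞)` with the opposite
pointwise order (top element `𝟎` = the constant `0` function = `⊤`). -/
abbrev Nabla : Type := Rpos →o ℝ≥0∞ᵒᵈ

/-- `a` is well-below `b`. -/
def wellBelow {L : Type*} [CompleteLattice L] (a b : L) : Prop :=
  ∀ S : Set L, b ≤ sSup S → ∃ s ∈ S, a ≤ s

/-- Step function: `∞` on `(0,s]`, `0` on `(s,∞)`. -/
noncomputable def stepFn (s : Rpos) : Nabla :=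
  ⟨fun t => OrderDual.toDual (if t.1 ≤ s.1 then (⊤ : ℝ≥0∞) else 0), by
    intro a b hab
    simp only [OrderDual.toDual_le_toDual]
    by_cases hb : b.1 ≤ s.1
    · have ha : a.1 ≤ s.1 := le_trans hab hb
      simp [ha, hb]
    · simp [hb]⟩

/-- Constant function `1/n`. -/
noncomputable def constFn (n : ℕ) : Nabla :=
  OrderHom.const Rpos (OrderDual.toDual ((n : ℝ≥0∞)⁻¹))

/-- for `f ∈ ∇` not identically `∞`, `f ◁ 𝟎` iff
(1) `f = ∞` on some interval `(0,s)` and (2) `inf_{t>0} f(t) > 0`. -/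
theorem stmt_14 (f : Nabla) (hf : f ≠ ⊥) :
    wellBelow f (⊤ : Nabla) ↔
      ((∃ s : Rpos, ∀ t : Rpos, t.1 < s.1 → OrderDual.ofDual (f t) = ⊤) ∧
        0 < ⨅ t : Rpos, OrderDual.ofDual (f t)) := by
  constructor
  · intro h
    constructor
    · -- use the family of step functions
      have hsup : (⊤ : Nabla) ≤ sSup (Set.range stepFn) := by
        intro t
        show (⨅ g ∈ Set.range stepFn, OrderDual.ofDual (g t)) ≤ 0
        have half : Rpos := ⟨t.1 / 2, half_pos t.2⟩
        refine le_trans (iInf₂_le (stepFn ⟨t.1 / 2, half_pos t.2⟩)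
          ⟨_, rfl⟩) ?_
        have : ¬ t.1 ≤ t.1 / 2 := by linarith [t.2]
        simp [stepFn, this]
        exact if_neg this
      obtain ⟨g, ⟨s, rfl⟩, hle⟩ := h _ hsup
      refine ⟨s, fun t ht => ?_⟩
      have := hle t
      have h2 : OrderDual.ofDual (stepFn s t) ≤ OrderDual.ofDual (f t) := this
      rw [top_le_iff.symm]
      refine le_trans ?_ h2
      simp [stepFn, le_of_lt ht]
      exact le_of_lt ht
    · -- use the family of constant functions 1/n
      have hsup : (⊤ : Nabla) ≤ sSup (Set.range constFn) := by
        intro t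
        show (⨅ g ∈ Set.range constFn, OrderDual.ofDual (g t)) ≤ 0
        rw [iInf_range]
        have : (⨅ n : ℕ, OrderDual.ofDual (constFn n t)) = 0 := by
          rw [show (0:ℝ≥0∞) = ⊥ from rfl, iInf_eq_bot]
          intro b hb
          obtain ⟨n, hn⟩ := ENNReal.exists_inv_nat_lt (ne_of_gt hb)
          exact ⟨n, hn⟩
        exact this.le
      obtain ⟨g, ⟨n, rfl⟩, hle⟩ := h _ hsup
      have hpos : (0 : ℝ≥0∞) < (n : ℝ≥0∞)⁻¹ :=
        ENNReal.inv_pos.mpr (ENNReal.natCast_ne_top n)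
      refine lt_of_lt_of_le hpos (le_iInf fun t => ?_)
      exact hle t
  · rintro ⟨⟨s, hs⟩, hm⟩ S hS
    set m := ⨅ t : Rpos, OrderDual.ofDual (f t) with hmdef
    have h0 : (⨅ g ∈ S, OrderDual.ofDual (g s)) ≤ 0 := hS s
    -- find g ∈ S with g s < m
    have : ∃ g ∈ S, OrderDual.ofDual (g s) < m := by
      by_contra hcon
      push_neg at hcon
      have : m ≤ ⨅ g ∈ S, OrderDual.ofDual (g s) := le_iInf₂ hcon
      exact absurd (lt_of_le_of_lt (this.trans h0) hm) (lt_irrefl _)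
    obtain ⟨g, hgS, hg⟩ := this
    refine ⟨g, hgS, fun t => ?_⟩
    show OrderDual.ofDual (g t) ≤ OrderDual.ofDual (f t)
    by_cases ht : t.1 < s.1
    · rw [hs t ht]; exact le_top
    · push_neg at ht
      have h1 : OrderDual.ofDual (g t) ≤ OrderDual.ofDual (g s) :=
        g.monotone (Subtype.coe_le_coe.mp ht)
      have h2 : m ≤ OrderDual.ofDual (f t) := iInf_le _ t
      exact h1.trans (hg.le.trans h2)
end

section
/- The lattice ∇ of non-increasing functions (0,∞) → [0,∞] with the opposite pointwise order is a value distributive lattice: it is completely distributive, its bottom (constant ∞) is well-below its top (constant 0), and if f ◁ 𝟎 and g ◁ 𝟎 then f ∨ g ◁ 𝟎 (the join taken in ∇, i.e., pointwise minimum in [0,∞]). -/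
open scoped ENNReal

open OrderDual

/-- Step function: `∞` on `(0,s)`, `v` on `[s,∞)`. -/
noncomputable def nstep (s : Rpos) (v : ℝ≥0∞) : Nabla :=
  ⟨fun t => toDual (if t < s then ⊤ else v), by
    intro a b hab
    simp only [toDual_le_toDual]
    split_ifs with h1 h2
    · exact le_rfl
    · exact absurd (lt_of_le_of_lt hab h1) h2
    · exact le_top
    · exact le_rfl⟩

lemma nabla_sSup_ofDual (S : Set Nabla) (t : Rpos) :
    ofDual ((sSup S) t) = ⨅ f ∈ S, ofDual (f t) := by
  rw [OrderHom.sSup_apply]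
  rfl

lemma nabla_le_iff (f g : Nabla) : f ≤ g ↔ ∀ t, ofDual (g t) ≤ ofDual (f t) := Iff.rfl

lemma nabla_top_apply (t : Rpos) : ofDual ((⊤ : Nabla) t) = 0 := rfl

lemma nabla_bot_apply (t : Rpos) : ofDual ((⊥ : Nabla) t) = ⊤ := rfl

/-- Sufficient condition for being well-below a given `b`. -/
lemma nstep_wellBelow (b : Nabla) (s : Rpos) (v : ℝ≥0∞) (hv : ofDual (b s) < v) :
    wellBelow (nstep s v) b := by
  intro S hS
  have h1 : ⨅ f ∈ S, ofDual (f s) ≤ ofDual (b s) := by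
    rw [← nabla_sSup_ofDual]
    exact (nabla_le_iff _ _).1 hS s
  have h2 : ⨅ f ∈ S, ofDual (f s) < v := lt_of_le_of_lt h1 hv
  rw [iInf_lt_iff] at h2
  obtain ⟨f, hf⟩ := h2
  rw [iInf_lt_iff] at hf
  obtain ⟨hfS, hfs⟩ := hf
  refine ⟨f, hfS, fun t => ?_⟩
  show ofDual (f t) ≤ ofDual ((nstep s v) t)
  show ofDual (f t) ≤ ofDual (toDual (if t < s then ⊤ else v))
  rw [ofDual_toDual]
  split_ifs with h
  · exact le_top
  · calc ofDual (f t) ≤ ofDual (f s) := f.mono (not_lt.1 h)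
      _ ≤ v := le_of_lt hfs

/-- Sufficient condition for being well-below `⊤`. -/
lemma wellBelow_top_of (f : Nabla) (s₀ : Rpos) (ε : ℝ≥0∞) (hε : 0 < ε)
    (h1 : ∀ t, t < s₀ → ofDual (f t) = ⊤) (h2 : ∀ t, ε ≤ ofDual (f t)) :
    wellBelow f (⊤ : Nabla) := by
  intro S hS
  have hz : ⨅ h ∈ S, ofDual (h s₀) ≤ 0 := by
    rw [← nabla_sSup_ofDual]
    exact (nabla_le_iff _ _).1 hS s₀
  have h3 : ⨅ h ∈ S, ofDual (h s₀) < ε := lt_of_le_of_lt hz hε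
  rw [iInf_lt_iff] at h3
  obtain ⟨h, hh⟩ := h3
  rw [iInf_lt_iff] at hh
  obtain ⟨hhS, hhs⟩ := hh
  refine ⟨h, hhS, fun t => ?_⟩
  show ofDual (h t) ≤ ofDual (f t)
  rcases lt_or_ge t s₀ with ht | ht
  · rw [h1 t ht]; exact le_top
  · calc ofDual (h t) ≤ ofDual (h s₀) := h.mono ht
      _ ≤ ε := le_of_lt hhs
      _ ≤ ofDual (f t) := h2 t

/-- Necessary condition: any `f ◁ ⊤` is `∞` on an initial interval. -/
lemma wellBelow_top_inf (f : Nabla) (hf : wellBelow f (⊤ : Nabla)) :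
    ∃ s₀ : Rpos, ∀ t, t < s₀ → ofDual (f t) = ⊤ := by
  have hS : (⊤ : Nabla) ≤ sSup (Set.range fun s : Rpos => nstep s 0) := by
    rw [nabla_le_iff]
    intro t
    rw [nabla_sSup_ofDual, nabla_top_apply]
    refine le_trans (iInf₂_le (nstep t 0) ⟨t, rfl⟩) ?_
    show ofDual (toDual (if t < t then ⊤ else 0)) ≤ 0
    simp
  obtain ⟨g, hgS, hfg⟩ := hf _ hS
  obtain ⟨s, rfl⟩ := hgS
  refine ⟨s, fun t ht => ?_⟩
  have := hfg t
  rw [nabla_le_iff] at hfg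
  have h := hfg t
  show ofDual (f t) = ⊤
  refine top_le_iff.1 (le_trans ?_ h)
  show (⊤ : ℝ≥0∞) ≤ ofDual (toDual (if t < s then ⊤ else 0))
  rw [ofDual_toDual, if_pos ht]

/-- Necessary condition: any `f ◁ ⊤` is bounded below by a positive constant. -/
lemma wellBelow_top_eps (f : Nabla) (hf : wellBelow f (⊤ : Nabla)) :
    ∃ ε : ℝ≥0∞, 0 < ε ∧ ∀ t, ε ≤ ofDual (f t) := by
  have hS : (⊤ : Nabla) ≤
      sSup (Set.range fun v : {v : ℝ≥0∞ // 0 < v} => OrderHom.const Rpos (toDual v.1)) := by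
    rw [nabla_le_iff]
    intro t
    rw [nabla_sSup_ofDual, nabla_top_apply]
    by_contra hc
    push_neg at hc
    obtain ⟨v, hv1, hv2⟩ := exists_between hc
    have hle : ⨅ g ∈ (Set.range fun v : {v : ℝ≥0∞ // 0 < v} =>
        OrderHom.const Rpos (toDual v.1)), ofDual (g t) ≤ v :=
      iInf₂_le (OrderHom.const Rpos (toDual v)) ⟨⟨v, hv1⟩, rfl⟩
    exact absurd (lt_of_le_of_lt hle hv2) (lt_irrefl _)
  obtain ⟨g, hgS, hfg⟩ := hf _ hS
  obtain ⟨v, rfl⟩ := hgS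
  exact ⟨v.1, v.2, fun t => hfg t⟩

/-- `∇` is a value distributive lattice: it is completely
distributive (Raney's characterization), `⊥ ◁ ⊤`, and the well-below class of
`⊤ = 𝟎` is closed under binary joins. -/
theorem stmt_15 :
    (∀ b : Nabla, b = sSup {a : Nabla | wellBelow a b}) ∧
    wellBelow (⊥ : Nabla) (⊤ : Nabla) ∧
    (∀ f g : Nabla, wellBelow f (⊤ : Nabla) → wellBelow g (⊤ : Nabla) →
      wellBelow (f ⊔ g) (⊤ : Nabla)) := by
  refine ⟨?_, ?_, ?_⟩
  · intro b
    refine le_antisymm ?_ (sSup_le fun a ha => ?_)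
    · -- b ≤ sSup of elements well-below b
      rw [nabla_le_iff]
      intro t
      rw [nabla_sSup_ofDual]
      by_contra hc
      push_neg at hc
      obtain ⟨v, hv1, hv2⟩ := exists_between hc
      have hmem : wellBelow (nstep t v) b := nstep_wellBelow b t v hv1
      have : ⨅ a ∈ {a : Nabla | wellBelow a b}, ofDual (a t) ≤ v := by
        refine le_trans (iInf₂_le (nstep t v) (show (nstep t v) ∈ {a : Nabla | wellBelow a b} from hmem)) ?_
        show ofDual (toDual (if t < t then ⊤ else v)) ≤ v
        simp
      exact absurd (lt_of_le_of_lt this hv2) (lt_irrefl _)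
    · -- each a well-below b is ≤ b
      obtain ⟨s, hs, has⟩ := ha {b} (by rw [sSup_singleton])
      rw [Set.mem_singleton_iff] at hs
      exact hs ▸ has
  · exact wellBelow_top_of ⊥ ⟨1, one_pos⟩ 1 one_pos (fun t _ => rfl) (fun t => le_top)
  · intro f g hf hg
    obtain ⟨sf, hsf⟩ := wellBelow_top_inf f hf
    obtain ⟨sg, hsg⟩ := wellBelow_top_inf g hg
    obtain ⟨εf, hεf, hεf2⟩ := wellBelow_top_eps f hf
    obtain ⟨εg, hεg, hεg2⟩ := wellBelow_top_eps g hg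
    have hsup : ∀ t, ofDual ((f ⊔ g) t) = min (ofDual (f t)) (ofDual (g t)) := fun t => rfl
    refine wellBelow_top_of (f ⊔ g) (min sf sg) (min εf εg) (lt_min hεf hεg)
      (fun t ht => ?_) (fun t => ?_)
    · rw [hsup, hsf t (lt_of_lt_of_le ht (min_le_left _ _)),
        hsg t (lt_of_lt_of_le ht (min_le_right _ _)), min_self]
    · rw [hsup]
      exact le_min (le_trans (min_le_left _ _) (hεf2 t)) (le_trans (min_le_right _ _) (hεg2 t))
end

section
/- Let ∇ be the commutative integral quantale of non-increasing functions (0,∞) → [0,∞] with operation (f ⊕ g)(t) = inf_{r+s=t}(f(r)+g(s)) and opposite pointwise order. Then the category of ∇-enriched categories (∇-Cat) is isomorphic to the category of quasi-pseudometric modular spaces with nonexpansive maps, via a(x,y)(t) = w(t,x,y). -/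
open scoped ENNReal

/-- The quantale operation `(f ⊕ g)(t) = inf_{r+s=t} (f(r)+g(s))`. -/
noncomputable def oplus (f g : Nabla) : Nabla where
  toFun t := OrderDual.toDual (⨅ (r : Rpos) (s : Rpos) (_ : r.1 + s.1 = t.1),
    (OrderDual.ofDual (f r) + OrderDual.ofDual (g s)))
  monotone' := by
    intro a b hab
    rw [OrderDual.toDual_le_toDual]
    refine le_iInf fun r => le_iInf fun s => le_iInf fun hrs => ?_
    have hδ : (0:ℝ) ≤ b.1 - a.1 := sub_nonneg.2 hab
    have hs' : (0:ℝ) < s.1 + (b.1 - a.1) := add_pos_of_pos_of_nonneg s.2 hδ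
    have h1 : (⨅ (r' : Rpos) (s' : Rpos) (_ : r'.1 + s'.1 = b.1),
        (OrderDual.ofDual (f r') + OrderDual.ofDual (g s'))) ≤
        OrderDual.ofDual (f r) + OrderDual.ofDual (g ⟨s.1 + (b.1 - a.1), hs'⟩) := by
      refine iInf_le_of_le r (iInf_le_of_le ⟨s.1 + (b.1 - a.1), hs'⟩
        (iInf_le_of_le ?_ le_rfl))
      simp only
      linarith [hrs]
    refine h1.trans (add_le_add le_rfl ?_)
    exact OrderDual.ofDual_le_ofDual.2 (g.monotone (show s.1 ≤ s.1 + (b.1 - a.1) by linarith))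

/-- the category of `∇`-categories is isomorphic to the category of
quasi-pseudometric modular spaces with nonexpansive maps, via
`a(x,y)(t) = w(t,x,y)`.  We express the isomorphism by: (i) a map
`a : X × X → ∇` satisfies the `∇`-category axioms iff the corresponding
`w(t,x,y) = a(x,y)(t)` is a quasi-pseudometric modular; (ii) `f` is a
`∇`-functor iff it is nonexpansive for the corresponding modulars; and (iii)
every quasi-pseudometric modular arises from a (unique such) `a`. -/
theorem stmt_17 {X Y : Type*} :
    -- (i) objects correspond
    (∀ a : X → X → Nabla,
      ((∀ x : X, (⊤ : Nabla) ≤ a x x) ∧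
        (∀ x y z : X, oplus (a x z) (a z y) ≤ a x y)) ↔
      ((∀ (t : Rpos) (x : X), OrderDual.ofDual (a x x t) = 0) ∧
        (∀ (x y z : X) (t s : Rpos),
          OrderDual.ofDual (a x y ⟨t.1 + s.1, add_pos t.2 s.2⟩) ≤
            OrderDual.ofDual (a x z t) + OrderDual.ofDual (a z y s)))) ∧
    -- (ii) morphisms correspond
    (∀ (a : X → X → Nabla) (b : Y → Y → Nabla) (f : X → Y),
      (∀ x y : X, a x y ≤ b (f x) (f y)) ↔
      (∀ (x y : X) (t : Rpos),
        OrderDual.ofDual (b (f x) (f y) t) ≤ OrderDual.ofDual (a x y t))) ∧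
    -- (iii) every quasi-pseudometric modular arises from a `∇`-structure
    (∀ w : ℝ → X → X → ℝ≥0∞,
      (∀ t : ℝ, 0 < t → ∀ x : X, w t x x = 0) →
      (∀ (x y z : X) (t s : ℝ), 0 < t → 0 < s →
        w (t + s) x y ≤ w t x z + w s z y) →
      ∃ a : X → X → Nabla, ∀ (t : Rpos) (x y : X),
        OrderDual.ofDual (a x y t) = w t.1 x y) := by

  refine ⟨?_, ?_, ?_⟩
  · -- (i)
    intro a
    constructor
    · rintro ⟨h1, h2⟩
      constructor
      · intro t x
        have := h1 x t
        have : a x x t = ⊤ := top_le_iff.mp this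
        simp [this]
      · intro x y z t s
        have := h2 x y z ⟨t.1 + s.1, add_pos t.2 s.2⟩
        have h3 : OrderDual.ofDual (a x y ⟨t.1 + s.1, add_pos t.2 s.2⟩) ≤
            (⨅ (r : Rpos) (s' : Rpos) (_ : r.1 + s'.1 = t.1 + s.1),
              (OrderDual.ofDual (a x z r) + OrderDual.ofDual (a z y s'))) := this
        exact h3.trans (iInf_le_of_le t (iInf_le_of_le s (iInf_le_of_le rfl le_rfl)))
    · rintro ⟨h1, h2⟩
      constructor
      · intro x t
        have := h1 t x
        have h : a x x t = ⊤ := by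
          rw [← OrderDual.ofDual_inj]; simpa using this
        exact le_of_eq h.symm
      · intro x y z t
        refine OrderDual.ofDual_le_ofDual.mp ?_
        refine le_iInf fun r => le_iInf fun s => le_iInf fun hrs => ?_
        have ht : t = ⟨r.1 + s.1, add_pos r.2 s.2⟩ := Subtype.ext hrs.symm
        rw [ht]
        exact h2 x y z r s
  · -- (ii)
    intro a b f
    constructor
    · intro h x y t
      exact OrderDual.ofDual_le_ofDual.2 (h x y t)
    · intro h x y t
      exact OrderDual.ofDual_le_ofDual.mp (h x y t)
  · -- (iii)
    intro w hrefl htri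
    refine ⟨fun x y => ⟨fun t => OrderDual.toDual (w t.1 x y), ?_⟩, fun t x y => rfl⟩
    intro t t' htt
    rw [OrderDual.toDual_le_toDual]
    rcases eq_or_lt_of_le (htt : t.1 ≤ t'.1) with h | h
    · rw [h]
    · have hs : (0:ℝ) < t'.1 - t.1 := sub_pos.2 h
      have := htri x y y t.1 (t'.1 - t.1) t.2 hs
      rw [hrefl _ hs] at this
      simpa using this
end
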